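/- Let S be an inverse semigroup, ρ a left congruence on S, and K = ker(ρ) = { a ∈ S : ∃ e ∈ E(S), a ρ e }. Then InK(ρ) = { a ∈ K : a⁻¹ ∈ K }. That is, a ρ aa⁻¹ holds if and only if both a and a⁻¹ are ρ-related to some idempotents. -/
import Mathlib


class InverseSemigroup (S : Type*) extends Semigroup S where
  inv : S → S
  mul_inv_mul : ∀ a : S, a * inv a * a = a
  inv_mul_inv : ∀ a : S, inv a * a * inv a = inv a
  inv_unique : ∀ a b : S, a * b * a = a → b * a * b = b → b = inv a

open InverseSemigroup

/-- `e` is an idempotent. -/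
def IsIdem {S : Type*} [Mul S] (e : S) : Prop := e * e = e

/-- `r` is a left congruence: an equivalence relation compatible with left multiplication. -/
def IsLeftCongruence {S : Type*} [Semigroup S] (r : S → S → Prop) : Prop :=
  Equivalence r ∧ ∀ a b c : S, r a b → r (c * a) (c * b)

/-- The inverse kernel of a relation: elements related to `a * a⁻¹`. -/
def InK {S : Type*} [InverseSemigroup S] (r : S → S → Prop) : Set S :=
  {a | r a (a * inv a)}

/-- The kernel: elements related to some idempotent. -/
def lker {S : Type*} [InverseSemigroup S] (r : S → S → Prop) : Set S :=
  {a | ∃ e, IsIdem e ∧ r a e}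

/-- `τ` is a congruence on the semilattice of idempotents `E(S)`. -/
def IsECong {S : Type*} [InverseSemigroup S] (τ : S → S → Prop) : Prop :=
  (∀ e f, τ e f → IsIdem e ∧ IsIdem f) ∧
  (∀ e, IsIdem e → τ e e) ∧
  (∀ e f, τ e f → τ f e) ∧
  (∀ e f g, τ e f → τ f g → τ e g) ∧
  (∀ e f g, IsIdem g → τ e f → τ (g * e) (g * f))

/-- The normaliser of a congruence on the idempotents. -/
def normaliser {S : Type*} [InverseSemigroup S] (τ : S → S → Prop) : Set S :=
  {a | ∀ e f, τ e f → τ (a * e * inv a) (a * f * inv a) ∧ τ (inv a * e * a) (inv a * f * a)}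

/-- `T` is a full inverse subsemigroup of `S`. -/
def IsFullInverseSub {S : Type*} [InverseSemigroup S] (T : Set S) : Prop :=
  (∀ e : S, IsIdem e → e ∈ T) ∧ (∀ a b, a ∈ T → b ∈ T → a * b ∈ T) ∧
  (∀ a, a ∈ T → inv a ∈ T)

section Aux
variable {S : Type*} [InverseSemigroup S]

lemma inv_invol (a : S) : inv (inv a) = a :=
  (inv_unique (inv a) a (inv_mul_inv a) (mul_inv_mul a)).symm

lemma idem_inv_mul (a : S) : IsIdem (inv a * a) := by
  show inv a * a * (inv a * a) = inv a * a
  rw [← mul_assoc, inv_mul_inv]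

lemma idem_mul_inv (a : S) : IsIdem (a * inv a) := by
  show a * inv a * (a * inv a) = a * inv a
  rw [← mul_assoc, mul_inv_mul]

lemma idem_inv_eq {e : S} (he : IsIdem e) : inv e = e := by
  have h : e * e * e = e := by rw [he, he]
  exact (inv_unique e e h h).symm

lemma idem_mul {e f : S} (he : IsIdem e) (hf : IsIdem f) : IsIdem (e * f) := by
  set x := inv (e * f) with hx
  have key : x * (e * f) * x = x := inv_mul_inv (e * f)
  have key2 : (e * f) * x * (e * f) = e * f := mul_inv_mul (e * f)
  have hg1 : (e * f) * (f * x * e) * (e * f) = e * f := by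
    have h1 : (e * f) * (f * x * e) * (e * f) = e * ((f * (f * (x * (e * (e * f))))))
        := by simp only [mul_assoc]
    have h2 : (e * f) * x * (e * f) = e * (f * (x * (e * f))) := by
      simp only [mul_assoc]
    rw [h1, ← mul_assoc f f, hf, ← mul_assoc e e, he, ← mul_assoc x e]
    have h3 : e * (f * (x * e * f)) = e * f * x * (e * f) := by simp only [mul_assoc]
    rw [h3, key2]
  have hg2 : (f * x * e) * (e * f) * (f * x * e) = f * x * e := by
    have h1 : (f * x * e) * (e * f) * (f * x * e)
        = f * (x * ((e * e) * ((f * f) * (x * e)))) := by simp only [mul_assoc]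
    have h2 : x * (e * f) * x = x * (e * (f * x)) := by simp only [mul_assoc]
    rw [h1, he, hf, ← mul_assoc e f, ← mul_assoc x (e*f)]
    have h3 : f * (x * (e * f) * (x * e)) = f * (x * (e * f) * x) * e := by
      simp only [mul_assoc]
    rw [h3, key]
  have hgx : f * x * e = x := inv_unique (e * f) (f * x * e) hg1 hg2
  -- x is idempotent
  have hxid : IsIdem x := by
    rw [← hgx]
    show f * x * e * (f * x * e) = f * x * e
    have h1 : f * x * e * (f * x * e) = f * (x * ((e * f) * (x * e))) := by
      simp only [mul_assoc]
    have h2 : x * (e * f) * x = x * ((e * f) * x) := by simp only [mul_assoc]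
    rw [h1, ← mul_assoc x (e*f)]
    have h3 : f * (x * (e * f) * (x * e)) = f * (x * (e * f) * x) * e := by
      simp only [mul_assoc]
    rw [h3, key]
  -- e * f = inv x, and inv of an idempotent is itself
  have : e * f = inv x := by rw [hx, inv_invol]
  rw [this, idem_inv_eq hxid]
  exact hxid

lemma idem_comm {e f : S} (he : IsIdem e) (hf : IsIdem f) : e * f = f * e := by
  have hef : IsIdem (e * f) := idem_mul he hf
  have hfe : IsIdem (f * e) := idem_mul hf he
  have h1 : (e * f) * (f * e) * (e * f) = e * f := by
    have : (e * f) * (f * e) * (e * f) = e * ((f * f) * ((e * e) * f)) := by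
      simp only [mul_assoc]
    rw [this, hf, he, ← mul_assoc, ← mul_assoc, mul_assoc (e*f) e f]
    exact hef
  have h2 : (f * e) * (e * f) * (f * e) = f * e := by
    have : (f * e) * (e * f) * (f * e) = f * ((e * e) * ((f * f) * e)) := by
      simp only [mul_assoc]
    rw [this, he, hf, ← mul_assoc, ← mul_assoc, mul_assoc (f*e) f e]
    exact hfe
  have := inv_unique (e * f) (f * e) h1 h2
  rw [this, idem_inv_eq hef]

lemma conj_idem (a : S) {f : S} (hf : IsIdem f) : IsIdem (a * f * inv a) := by
  show a * f * inv a * (a * f * inv a) = a * f * inv a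
  have h1 : a * f * inv a * (a * f * inv a) = a * (f * (inv a * a) * (f * inv a)) := by
    simp only [mul_assoc]
  rw [h1, idem_comm hf (idem_inv_mul a)]
  have h2 : a * (inv a * a * f * (f * inv a)) = a * inv a * a * (f * f) * inv a := by
    simp only [mul_assoc]
  rw [h2, mul_inv_mul, hf]

end Aux

theorem stmt1 {S : Type*} [InverseSemigroup S] (r : S → S → Prop)
    (hr : IsLeftCongruence r) :
    InK r = {a | a ∈ lker r ∧ inv a ∈ lker r} := by
  obtain ⟨⟨hrefl, hsymm, htrans⟩, hleft⟩ := hr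
  ext a
  simp only [InK, lker, Set.mem_setOf_eq]
  constructor
  · intro h
    refine ⟨⟨a * inv a, idem_mul_inv a, h⟩, ⟨inv a * a, idem_inv_mul a, ?_⟩⟩
    have := hleft _ _ (inv a) h
    rw [← mul_assoc, inv_mul_inv] at this
    exact hsymm this
  · rintro ⟨⟨e, he, hae⟩, ⟨f, hf, haf⟩⟩
    -- chain: a ~ a a⁻¹ e ~ e a f ~ a f a⁻¹ e ~ a f ~ a a⁻¹
    have h1 : r a (a * inv a * e) := by
      have := hleft _ _ (a * inv a) hae
      rwa [mul_inv_mul] at this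
    have h2 : r (a * inv a * e) (e * a * f) := by
      have := hleft _ _ (e * a) haf
      rwa [mul_assoc, idem_comm he (idem_mul_inv a)] at this
    have h3 : r (e * a * f) (a * f * inv a * e) := by
      have := hleft _ _ (e * (a * f * inv a)) hae
      have lhs : e * (a * f * inv a) * a = e * a * f := by
        have : e * (a * f * inv a) * a = e * (a * (f * (inv a * a))) := by
          simp only [mul_assoc]
        rw [this, idem_comm hf (idem_inv_mul a)]
        have : e * (a * (inv a * a * f)) = e * (a * inv a * a) * f := by
          simp only [mul_assoc]
        rw [this, mul_inv_mul]
      have rhs : e * (a * f * inv a) * e = a * f * inv a * e := by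
        rw [idem_comm he (conj_idem a hf), mul_assoc, he]
      rwa [lhs, rhs] at this
    have h4 : r (a * f) (a * f * inv a * e) := by
      have := hleft _ _ (a * f * inv a) hae
      have lhs : a * f * inv a * a = a * f := by
        have : a * f * inv a * a = a * (f * (inv a * a)) := by simp only [mul_assoc]
        rw [this, idem_comm hf (idem_inv_mul a)]
        have : a * (inv a * a * f) = a * inv a * a * f := by simp only [mul_assoc]
        rw [this, mul_inv_mul]
      rwa [lhs] at this
    have h5 : r (a * inv a) (a * f) := hleft _ _ a haf
    exact htrans (htrans (htrans h1 h2) (htrans h3 (hsymm h4))) (hsymm h5)
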